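/- For every k ≥ 0, if H_0,…,H_k are nowhere zero then the operator identity L_k∘((1/H_k)·)∘(T_i − T_j^k(b)·) = (T_i − T_j^k(b)·)∘((1/T_j(H_k))·)∘L_{k+1} holds on 𝔊. -/

import Mathlib

/-!
Discrete (quad-graph) setting: the space `𝔊` is modelled by `QG = ℤ → ℤ → ℝ`
(functions `φ(i,j)`), with the shifts `Ti`, `Tj`, their inverses, and the
`k`-fold shifts `TiZ k`, `TjZ k`.  For `g : QG`, pointwise multiplication
`g * φ` models the operator `g·`.
-/

/-- The function space `𝔊` of functions `ℤ² → ℝ`. -/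
abbrev QG : Type := ℤ → ℤ → ℝ

namespace QG

noncomputable section

/-- The shift operator `T_i(φ)(i,j) = φ(i+1,j)`. -/
def Ti (φ : QG) : QG := fun i j => φ (i + 1) j

/-- The shift operator `T_j(φ)(i,j) = φ(i,j+1)`. -/
def Tj (φ : QG) : QG := fun i j => φ i (j + 1)

/-- The `k`-fold shift in `i`. -/
def TiZ (k : ℤ) (φ : QG) : QG := fun i j => φ (i + k) j

/-- The `k`-fold shift in `j`. -/
def TjZ (k : ℤ) (φ : QG) : QG := fun i j => φ i (j + k)

/-- The inverse shift `T_i⁻¹`. -/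
def TiInv (φ : QG) : QG := fun i j => φ (i - 1) j

/-- The inverse shift `T_j⁻¹`. -/
def TjInv (φ : QG) : QG := fun i j => φ i (j - 1)

/-- A function that is nowhere zero. -/
def NowhereZero (φ : QG) : Prop := ∀ i j, φ i j ≠ 0

/-- The linearization operator `L = T_i∘T_j − a·T_i − b·T_j − c·`. -/
def L (a b c : QG) (φ : QG) : QG := Ti (Tj φ) - a * Ti φ - b * Tj φ - c * φ

/-- The pair `(b_k, H_k)` of the Laplace j-transformations:
`b_0 = a`, `H_0 = c + b·T_i⁻¹(a)`,
`b_{k+1} = T_i⁻¹(b_k)·T_j(H_k)/H_k`,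
`H_{k+1} = T_j(H_k) − T_j^k(b)·b_{k+1} + T_j^{k+1}(b)·T_i⁻¹(b_{k+1})`. -/
def bH (a b c : QG) : ℕ → QG × QG
  | 0 => (a, c + b * TiInv a)
  | k + 1 =>
      let bk := TiInv (bH a b c k).1 * Tj (bH a b c k).2 / (bH a b c k).2
      (bk, Tj (bH a b c k).2 - TjZ (k : ℤ) b * bk + TjZ ((k : ℤ) + 1) b * TiInv bk)

/-- The function `b_k`. -/
def bj (a b c : QG) (k : ℕ) : QG := (bH a b c k).1

/-- The Laplace j-invariant `H_k`. -/
def Hj (a b c : QG) (k : ℕ) : QG := (bH a b c k).2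

/-- The operator `L_k`: `L_0 = L` and
`L_k = (T_i − T_j^k(b)·)∘(T_j − T_i⁻¹(b_k)·) − H_k·` for `k ≥ 1`. -/
def Lk (a b c : QG) : ℕ → QG → QG
  | 0, φ => L a b c φ
  | k + 1, φ =>
      Ti (Tj φ - TiInv (bj a b c (k + 1)) * φ)
        - TjZ ((k : ℤ) + 1) b * (Tj φ - TiInv (bj a b c (k + 1)) * φ)
        - Hj a b c (k + 1) * φ

/-- `Bo (k+1)` is the operator `B_k = (T_j − T_i⁻¹(b_k)·)∘B_{k-1}`; `Bo 0 = id` is `B_{-1}`. -/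
def Bo (a b c : QG) : ℕ → QG → QG
  | 0, φ => φ
  | k + 1, φ => Tj (Bo a b c k φ) - TiInv (bj a b c k) * Bo a b c k φ

/-- `Bbar k` is the operator `B̄_k`: `B̄_0 = id`, `B̄_k = (T_j − b_k·)∘B̄_{k-1}`. -/
def Bbar (a b c : QG) : ℕ → QG → QG
  | 0, φ => φ
  | k + 1, φ => Tj (Bbar a b c k φ) - bj a b c (k + 1) * Bbar a b c k φ

/-- `Rchain p` is the composition
`((1/H_0)·)∘(T_i − b·)∘((1/H_1)·)∘(T_i − T_j(b)·)∘···∘((1/H_{p-1})·)∘(T_i − T_j^{p-1}(b)·)`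
(the identity for `p = 0`). -/
def Rchain (a b c : QG) : ℕ → QG → QG
  | 0, φ => φ
  | k + 1, φ => Rchain a b c k ((1 / Hj a b c k) * (Ti φ - TjZ (k : ℤ) b * φ))

end

lemma bj_succ (a b c : QG) (k : ℕ) :
    bj a b c (k + 1) = TiInv (bj a b c k) * Tj (Hj a b c k) / Hj a b c k := rfl

lemma Hj_succ (a b c : QG) (k : ℕ) :
    Hj a b c (k + 1) = Tj (Hj a b c k) - TjZ (k : ℤ) b * bj a b c (k + 1)
      + TjZ ((k : ℤ) + 1) b * TiInv (bj a b c (k + 1)) := rfl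

lemma Lk_fac (a b c : QG) (k : ℕ) (φ : QG) :
    Lk a b c k φ = Ti (Tj φ - TiInv (bj a b c k) * φ)
      - TjZ (k : ℤ) b * (Tj φ - TiInv (bj a b c k) * φ) - Hj a b c k * φ := by
  cases k with
  | zero =>
      funext i j
      simp [Lk, L, Ti, Tj, TiInv, TjZ, bj, Hj, bH]
      ring
  | succ m =>
      show Lk a b c (m + 1) φ = _
      simp only [Lk]
      norm_num

/-- For every `k ≥ 0`, if `H_0, …, H_k` are nowhere zero then the operator
identity `L_k∘((1/H_k)·)∘(T_i − T_j^k(b)·) = (T_i − T_j^k(b)·)∘((1/T_j(H_k))·)∘L_{k+1}`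
holds on `𝔊`. -/
theorem statement17 (a b c : QG) (k : ℕ) (hH : ∀ m, m ≤ k → NowhereZero (Hj a b c m)) :
    ∀ φ : QG,
      Lk a b c k ((1 / Hj a b c k) * (Ti φ - TjZ (k : ℤ) b * φ))
        = Ti ((1 / Tj (Hj a b c k)) * Lk a b c (k + 1) φ)
            - TjZ (k : ℤ) b * ((1 / Tj (Hj a b c k)) * Lk a b c (k + 1) φ) := by
  intro φ
  have h := hH k le_rfl
  rw [Lk_fac, Lk_fac, bj_succ, Hj_succ, bj_succ]
  funext i j
  have h0 : Hj a b c k (i - 1) j ≠ 0 := h _ _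
  have h1 : Hj a b c k i j ≠ 0 := h _ _
  have h2 : Hj a b c k (i + 1) j ≠ 0 := h _ _
  have h3 : Hj a b c k i (j + 1) ≠ 0 := h _ _
  have h4 : Hj a b c k (i + 1) (j + 1) ≠ 0 := h _ _
  have h5 : Hj a b c k (i - 1) (j + 1) ≠ 0 := h _ _
  simp only [Pi.mul_apply, Pi.sub_apply, Pi.add_apply, Pi.div_apply, Pi.one_apply,
    Pi.inv_apply, one_div, Ti, Tj, TiInv, TjZ]
  simp only [add_sub_cancel_right, Nat.cast_add, Nat.cast_one]
  field_simp
  ring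

end QG
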